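/- (Coupling step 1.) Under the stated one-inner-step setup, for every u ∈ ℝ^l: α_s ⟨∇φ(v_{k+1}), z_k − u⟩ ≤ (α_s/τ_{1,s}) · { φ(v_{k+1}) − E[φ(y_{k+1})] + τ₂ φ(ṽ^s) − τ₂ φ(v_{k+1}) − τ₂ ⟨∇φ(v_{k+1}), ṽ^s − v_{k+1}⟩ } + V_{z_k}(u) − E[V_{z_{k+1}}(u)]. -/

import Mathlib

open scoped RealInnerProductSpace BigOperators

lemma pdasmd_norm_bounds {n : ℕ} (H : EuclideanSpace ℝ (Fin n) → ℝ)
    (h0 : ∀ x, H x = 0 ↔ x = 0)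
    (hs : ∀ (c : ℝ) (x : EuclideanSpace ℝ (Fin n)), H (c • x) = |c| * H x)
    (ht : ∀ x y, H (x + y) ≤ H x + H y) :
    ∃ c C : ℝ, 0 < c ∧ 0 < C ∧ (∀ x, c * ‖x‖ ≤ H x) ∧ (∀ x, H x ≤ C * ‖x‖) := by
  have hH0 : H 0 = 0 := (h0 0).mpr rfl
  have hneg : ∀ x, H (-x) = H x := by
    intro x; rw [← neg_one_smul ℝ x, hs]; simp
  have hnn : ∀ x, 0 ≤ H x := by
    intro x
    have := ht x (-x)
    rw [add_neg_cancel, hH0, hneg] at this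
    linarith
  -- upper bound
  set C0 : ℝ := ∑ i, H (EuclideanSpace.single i (1:ℝ)) with hC0
  have hC0nn : 0 ≤ C0 := Finset.sum_nonneg fun i _ => hnn _
  have habs : ∀ (x : EuclideanSpace ℝ (Fin n)) i, |x i| ≤ ‖x‖ := by
    intro x i
    have h1 : |⟪EuclideanSpace.single i (1:ℝ), x⟫| ≤ ‖EuclideanSpace.single i (1:ℝ)‖ * ‖x‖ :=
      abs_real_inner_le_norm _ _
    simpa [EuclideanSpace.inner_single_left, EuclideanSpace.norm_single] using h1
  have hdecomp : ∀ x : EuclideanSpace ℝ (Fin n),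
      x = ∑ i, x i • EuclideanSpace.single i (1:ℝ) := by
    intro x
    have := ((EuclideanSpace.basisFun (Fin n) ℝ).sum_repr x).symm
    simpa only [EuclideanSpace.basisFun_apply, EuclideanSpace.basisFun_repr] using this
  have hupper : ∀ x, H x ≤ (C0 + 1) * ‖x‖ := by
    intro x
    have h1 : H x ≤ ∑ i, H (x i • EuclideanSpace.single i (1:ℝ)) := by
      calc H x = H (∑ i, x i • EuclideanSpace.single i (1:ℝ)) := by rw [← hdecomp]
        _ ≤ _ := Finset.le_sum_of_subadditive H hH0.le ht _ _
    have h2 : ∑ i, H (x i • EuclideanSpace.single i (1:ℝ)) ≤ ∑ i, ‖x‖ * H (EuclideanSpace.single i (1:ℝ)) := by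
      apply Finset.sum_le_sum
      intro i _
      rw [hs]
      exact mul_le_mul_of_nonneg_right (habs x i) (hnn _)
    rw [← Finset.mul_sum] at h2
    nlinarith [norm_nonneg x]
  have hlip : ∀ x y, |H x - H y| ≤ (C0 + 1) * ‖x - y‖ := by
    intro x y
    have h1 : H x ≤ H y + H (x - y) := by
      have := ht y (x - y); simpa using this
    have h2 : H y ≤ H x + H (x - y) := by
      have := ht x (y - x)
      rw [show x + (y - x) = y by abel] at this
      rw [show y - x = -(x-y) by abel, hneg] at this
      linarith
    have := hupper (x - y)
    rw [abs_le]; constructor <;> linarith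
  have hcont : Continuous H := by
    apply Metric.continuous_iff.mpr
    intro x ε hε
    refine ⟨ε / (C0 + 2), by positivity, fun y hy => ?_⟩
    have h1 := hlip y x
    have h2 : ‖y - x‖ = dist y x := (dist_eq_norm y x).symm
    rw [Real.dist_eq]
    have h3 : (C0 + 1) * (ε / (C0 + 2)) < (C0 + 2) * (ε / (C0 + 2)) := by
      apply mul_lt_mul_of_pos_right (by linarith) (by positivity)
    have h4 : (C0 + 2) * (ε / (C0 + 2)) = ε := by field_simp
    calc |H y - H x| ≤ (C0 + 1) * ‖y - x‖ := h1
      _ = (C0 + 1) * dist y x := by rw [h2]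
      _ ≤ (C0 + 1) * (ε / (C0 + 2)) := mul_le_mul_of_nonneg_left hy.le (by positivity)
      _ < ε := by linarith
  -- lower bound
  by_cases hn : n = 0
  · subst hn
    refine ⟨1, C0 + 1, one_pos, by positivity, fun x => ?_, hupper⟩
    have hx : x = 0 := Subsingleton.elim x 0
    simp [hx, hH0]
  · haveI : Nonempty (Fin n) := ⟨⟨0, Nat.pos_of_ne_zero hn⟩⟩
    obtain ⟨x0, hx0mem, hmin⟩ := (isCompact_sphere (0 : EuclideanSpace ℝ (Fin n)) 1).exists_isMinOn
      (NormedSpace.sphere_nonempty.mpr zero_le_one) hcont.continuousOn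
    have hx0norm : ‖x0‖ = 1 := mem_sphere_zero_iff_norm.mp hx0mem
    have hx0ne : x0 ≠ 0 := by
      intro h; rw [h, norm_zero] at hx0norm; norm_num at hx0norm
    have hc : 0 < H x0 := lt_of_le_of_ne (hnn x0) fun h => hx0ne ((h0 x0).mp h.symm)
    refine ⟨H x0, C0 + 1, hc, by positivity, fun x => ?_, hupper⟩
    by_cases hx : x = 0
    · simp [hx, hH0]
    · have hr : 0 < ‖x‖ := norm_pos_iff.mpr hx
      set u : EuclideanSpace ℝ (Fin n) := ‖x‖⁻¹ • x with hu
      have humem : u ∈ Metric.sphere (0 : EuclideanSpace ℝ (Fin n)) 1 := by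
        simp [hu, norm_smul, abs_of_pos (inv_pos.mpr hr), inv_mul_cancel₀ hr.ne']
      have h1 : H x0 ≤ H u := hmin humem
      have h2 : H x = ‖x‖ * H u := by
        rw [hu, hs, abs_of_pos (inv_pos.mpr hr)]
        field_simp
      nlinarith

lemma pdasmd_dual_facts {n : ℕ} (H Hd : EuclideanSpace ℝ (Fin n) → ℝ)
    (hHd : ∀ u, Hd u = sSup ((fun v => ⟪u, v⟫) '' {v | H v ≤ 1}))
    (hs : ∀ (c : ℝ) (x : EuclideanSpace ℝ (Fin n)), H (c • x) = |c| * H x)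
    (ht : ∀ x y, H (x + y) ≤ H x + H y)
    (c C : ℝ) (hc : 0 < c) (hC : 0 < C)
    (hlow : ∀ x, c * ‖x‖ ≤ H x) (hup : ∀ x, H x ≤ C * ‖x‖) :
    (∀ u, 0 ≤ Hd u) ∧
    (∀ u x, ⟪u, x⟫ ≤ Hd u * H x) ∧
    (∀ u v, Hd (u + v) ≤ Hd u + Hd v) ∧
    (∀ u, Hd (-u) = Hd u) ∧
    (∀ (a : ℝ) u, 0 ≤ a → Hd (a • u) ≤ a * Hd u) ∧
    (∀ u, ∃ v, H v ≤ 1 ∧ ⟪u, v⟫ = Hd u) ∧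
    (∀ u, ‖u‖ ≤ C * Hd u) := by
  have hH0 : H 0 = 0 := by have := hs 0 0; simpa using this
  have hneg : ∀ x, H (-x) = H x := by
    intro x; rw [← neg_one_smul ℝ x, hs]; simp
  have hbdd : ∀ u, BddAbove ((fun v => ⟪u, v⟫) '' {v | H v ≤ 1}) := by
    intro u
    refine ⟨‖u‖ / c, ?_⟩
    rintro y ⟨v, hv, rfl⟩
    have h1 : ⟪u, v⟫ ≤ ‖u‖ * ‖v‖ := real_inner_le_norm u v
    have h2 : c * ‖v‖ ≤ 1 := le_trans (hlow v) hv
    have h3 : ‖v‖ ≤ 1 / c := by rw [le_div_iff₀ hc]; linarith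
    calc ⟪u, v⟫ ≤ ‖u‖ * ‖v‖ := h1
      _ ≤ ‖u‖ * (1 / c) := mul_le_mul_of_nonneg_left h3 (norm_nonneg u)
      _ = ‖u‖ / c := by ring
  have hmem_le : ∀ u v, H v ≤ 1 → ⟪u, v⟫ ≤ Hd u := by
    intro u v hv
    rw [hHd]
    exact le_csSup (hbdd u) ⟨v, hv, rfl⟩
  have hsup_le : ∀ u b, (∀ v, H v ≤ 1 → ⟪u, v⟫ ≤ b) → Hd u ≤ b := by
    intro u b hb
    rw [hHd]
    have hne : ((fun v => ⟪u, v⟫) '' {v | H v ≤ 1}).Nonempty :=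
      ⟨⟪u, (0 : EuclideanSpace ℝ (Fin n))⟫, ⟨0, by simp [hH0], rfl⟩⟩
    apply csSup_le hne
    rintro y ⟨v, hv, rfl⟩
    exact hb v hv
  have hnn : ∀ u, 0 ≤ Hd u := by
    intro u
    have := hmem_le u 0 (by simp [hH0])
    simpa using this
  have hinner_le : ∀ u x, ⟪u, x⟫ ≤ Hd u * H x := by
    intro u x
    by_cases hx : x = 0
    · simp [hx, hH0]
    · have hHx : 0 < H x := by
        have := hlow x
        have : 0 < c * ‖x‖ := mul_pos hc (norm_pos_iff.mpr hx)
        linarith [hlow x]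
      have hv : H ((H x)⁻¹ • x) ≤ 1 := by
        rw [hs, abs_of_pos (inv_pos.mpr hHx), inv_mul_cancel₀ hHx.ne']
      have := hmem_le u _ hv
      rw [real_inner_smul_right] at this
      calc ⟪u, x⟫ = (H x) * ((H x)⁻¹ * ⟪u, x⟫) := by field_simp
        _ ≤ (H x) * Hd u := mul_le_mul_of_nonneg_left this hHx.le
        _ = Hd u * H x := mul_comm _ _
  have hsub : ∀ u v, Hd (u + v) ≤ Hd u + Hd v := by
    intro u v
    apply hsup_le
    intro w hw
    rw [inner_add_left]
    exact add_le_add (hmem_le u w hw) (hmem_le v w hw)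
  have hnegHd : ∀ u, Hd (-u) = Hd u := by
    have key : ∀ u, Hd (-u) ≤ Hd u := by
      intro u
      apply hsup_le
      intro w hw
      have : ⟪u, -w⟫ ≤ Hd u := hmem_le u (-w) (by rw [hneg]; exact hw)
      simpa [inner_neg_left, inner_neg_right] using this
    intro u
    refine le_antisymm (key u) ?_
    have := key (-u)
    rwa [neg_neg] at this
  have hsmul : ∀ (a : ℝ) u, 0 ≤ a → Hd (a • u) ≤ a * Hd u := by
    intro a u ha
    apply hsup_le
    intro w hw
    rw [real_inner_smul_left]
    exact mul_le_mul_of_nonneg_left (hmem_le u w hw) ha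
  have hcont : Continuous H := by
    apply Metric.continuous_iff.mpr
    intro x ε hε
    refine ⟨ε / (C + 1), by positivity, fun y hy => ?_⟩
    have h1 : H y ≤ H x + H (y - x) := by
      have := ht x (y - x); rw [show x + (y - x) = y by abel] at this; linarith
    have h2 : H x ≤ H y + H (y - x) := by
      have := ht y (x - y)
      rw [show y + (x - y) = x by abel] at this
      rw [show x - y = -(y - x) by abel, hneg] at this
      linarith
    have h3 : H (y - x) ≤ C * ‖y - x‖ := hup _
    have h4 : ‖y - x‖ = dist y x := (dist_eq_norm y x).symm
    rw [Real.dist_eq]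
    have h5 : C * dist y x ≤ C * (ε / (C + 1)) := mul_le_mul_of_nonneg_left hy.le hC.le
    have h6 : C * (ε / (C + 1)) < (C + 1) * (ε / (C + 1)) := by
      apply mul_lt_mul_of_pos_right (by linarith) (by positivity)
    have h7 : (C + 1) * (ε / (C + 1)) = ε := by field_simp
    have habs : |H y - H x| ≤ C * dist y x := by
      rw [abs_le]; constructor <;> nlinarith [h1, h2, h3]
    linarith
  have hattain : ∀ u, ∃ v, H v ≤ 1 ∧ ⟪u, v⟫ = Hd u := by
    intro u
    have hclosed : IsClosed {v : EuclideanSpace ℝ (Fin n) | H v ≤ 1} :=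
      isClosed_le hcont continuous_const
    have hsubset : {v : EuclideanSpace ℝ (Fin n) | H v ≤ 1} ⊆ Metric.closedBall 0 (1 / c) := by
      intro v hv
      rw [Metric.mem_closedBall, dist_zero_right]
      rw [le_div_iff₀ hc]
      calc ‖v‖ * c = c * ‖v‖ := mul_comm _ _
        _ ≤ H v := hlow v
        _ ≤ 1 := hv
    have hcompact : IsCompact {v : EuclideanSpace ℝ (Fin n) | H v ≤ 1} :=
      (isCompact_closedBall (0 : EuclideanSpace ℝ (Fin n)) (1 / c)).of_isClosed_subset
        hclosed hsubset
    obtain ⟨v, hvmem, hvmax⟩ := hcompact.exists_isMaxOn (f := fun v => ⟪u, v⟫) ⟨0, by simp [hH0]⟩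
      (Continuous.continuousOn (continuous_const.inner continuous_id))
    refine ⟨v, hvmem, ?_⟩
    rw [hHd]
    symm
    apply IsGreatest.csSup_eq
    exact ⟨⟨v, hvmem, rfl⟩, by rintro y ⟨w, hw, rfl⟩; exact hvmax hw⟩
  have hlowd : ∀ u, ‖u‖ ≤ C * Hd u := by
    intro u
    by_cases hu : u = 0
    · rw [hu, norm_zero]
      exact mul_nonneg hC.le (hnn 0)
    · have hnu : 0 < ‖u‖ := norm_pos_iff.mpr hu
      have hv : H ((C * ‖u‖)⁻¹ • u) ≤ 1 := by
        rw [hs, abs_of_pos (by positivity)]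
        have := hup u
        rw [inv_mul_le_iff₀ (by positivity)]
        simpa using this
      have := hmem_le u _ hv
      rw [real_inner_smul_right, real_inner_self_eq_norm_sq] at this
      have h2 : (C * ‖u‖)⁻¹ * ‖u‖ ^ 2 = ‖u‖ / C := by field_simp
      rw [h2] at this
      rw [div_le_iff₀ hC] at this
      linarith [this]
  exact ⟨hnn, hinner_le, hsub, hnegHd, hsmul, hattain, hlowd⟩

lemma pdasmd_grad_le {n : ℕ} {f : EuclideanSpace ℝ (Fin n) → ℝ}
    {g x y : EuclideanSpace ℝ (Fin n)}
    (hconv : ConvexOn ℝ Set.univ f) (hg : HasGradientAt f g x) :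
    f x + ⟪g, y - x⟫ ≤ f y := by
  by_cases hxy : y = x
  · simp [hxy]
  set d := y - x with hd
  have hline : HasDerivAt (fun t : ℝ => x + t • d) d 0 := by
    simpa using ((hasDerivAt_id (0 : ℝ)).smul_const d).const_add x
  have hcomp : HasDerivAt (fun t : ℝ => f (x + t • d)) ⟪g, d⟫ 0 := by
    have h1 : HasFDerivAt f (InnerProductSpace.toDual ℝ _ g) ((fun t : ℝ => x + t • d) 0) := by
      simpa using hg.hasFDerivAt
    have h2 := h1.comp_hasDerivAt 0 hline
    simpa [Function.comp_def, InnerProductSpace.toDual_apply_apply] using h2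
  have haff : ConvexOn ℝ Set.univ (fun t : ℝ => f (x + t • d)) := by
    have h2 : ConvexOn ℝ ((AffineMap.lineMap x y : ℝ →ᵃ[ℝ] EuclideanSpace ℝ (Fin n)) ⁻¹' Set.univ)
        (f ∘ (AffineMap.lineMap x y : ℝ →ᵃ[ℝ] EuclideanSpace ℝ (Fin n))) :=
      hconv.comp_affineMap _
    simp only [Set.preimage_univ] at h2
    have heq : (fun t : ℝ => f (x + t • d))
        = f ∘ (AffineMap.lineMap x y : ℝ →ᵃ[ℝ] EuclideanSpace ℝ (Fin n)) := by
      funext t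
      simp only [Function.comp_apply, AffineMap.lineMap_apply_module, hd]
      congr 1
      module
    rw [heq]
    exact h2
  have hslope := haff.le_slope_of_hasDerivAt (Set.mem_univ (0 : ℝ)) (Set.mem_univ 1)
    one_pos hcomp
  rw [slope_def_field] at hslope
  simp only [one_smul, zero_smul, add_zero, sub_zero, div_one] at hslope
  have hyd : x + d = y := by rw [hd]; abel
  rw [hyd] at hslope
  linarith

lemma pdasmd_descent {n : ℕ} (H : EuclideanSpace ℝ (Fin n) → ℝ)
    (hHsmul : ∀ (c : ℝ) (x : EuclideanSpace ℝ (Fin n)), H (c • x) = |c| * H x)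
    (f : EuclideanSpace ℝ (Fin n) → ℝ) (g : EuclideanSpace ℝ (Fin n) → EuclideanSpace ℝ (Fin n))
    (hf : ∀ x, HasGradientAt f (g x) x) (hgcont : Continuous g)
    (L : ℝ)
    (hkey : ∀ a b z, ⟪g a - g b, z⟫ ≤ L * H (a - b) * H z)
    (x y : EuclideanSpace ℝ (Fin n)) :
    f y ≤ f x + ⟪g x, y - x⟫ + L / 2 * H (y - x) ^ 2 := by
  set d := y - x with hd
  have hψ : ∀ t : ℝ, HasDerivAt (fun t : ℝ => f (x + t • d)) ⟪g (x + t • d), d⟫ t := by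
    intro t
    have hline : HasDerivAt (fun t : ℝ => x + t • d) d t := by
      simpa using ((hasDerivAt_id (t : ℝ)).smul_const d).const_add x
    have h1 : HasFDerivAt f (InnerProductSpace.toDual ℝ _ (g (x + t • d)))
        ((fun t : ℝ => x + t • d) t) := by
      simpa using (hf (x + t • d)).hasFDerivAt
    have h2 := h1.comp_hasDerivAt t hline
    simpa [Function.comp_def, InnerProductSpace.toDual_apply_apply] using h2
  have hcont' : Continuous fun t : ℝ => ⟪g (x + t • d), d⟫ := by
    apply Continuous.inner _ continuous_const
    exact hgcont.comp (by continuity)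
  have hint : ∫ t in (0:ℝ)..1, ⟪g (x + t • d), d⟫
      = f (x + (1:ℝ) • d) - f (x + (0:ℝ) • d) :=
    intervalIntegral.integral_eq_sub_of_hasDerivAt (fun t _ => hψ t)
      (hcont'.intervalIntegrable 0 1)
  have hptwise : ∀ t ∈ Set.Icc (0:ℝ) 1,
      ⟪g (x + t • d), d⟫ ≤ ⟪g x, d⟫ + t * (L * H d ^ 2) := by
    intro t ht
    have h1 : ⟪g (x + t • d) - g x, d⟫ ≤ L * H (x + t • d - x) * H d := hkey _ _ _
    have h2 : x + t • d - x = t • d := by abel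
    rw [h2, hHsmul, abs_of_nonneg ht.1] at h1
    rw [inner_sub_left] at h1
    nlinarith [h1]
  have hintR : ∫ t in (0:ℝ)..1, (⟪g x, d⟫ + t * (L * H d ^ 2))
      = ⟪g x, d⟫ + L / 2 * H d ^ 2 := by
    have hii : IntervalIntegrable (fun t : ℝ => t * (L * H d ^ 2)) MeasureTheory.volume 0 1 :=
      ((continuous_id.mul continuous_const : Continuous fun t : ℝ => t * (L * H d ^ 2)).intervalIntegrable 0 1)
    rw [intervalIntegral.integral_add intervalIntegrable_const hii]
    rw [intervalIntegral.integral_const]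
    rw [intervalIntegral.integral_mul_const, integral_id]
    simp only [smul_eq_mul, one_smul]
    ring
  have hmono := intervalIntegral.integral_mono_on (μ := MeasureTheory.volume) (by norm_num : (0:ℝ) ≤ 1)
    (hcont'.intervalIntegrable 0 1)
    ((continuous_const.add (continuous_id.mul continuous_const) :
        Continuous fun t : ℝ => ⟪g x, d⟫ + t * (L * H d ^ 2)).intervalIntegrable 0 1)
    hptwise
  simp only [Pi.add_apply] at hmono
  rw [hint, hintR] at hmono
  have hy1 : x + (1:ℝ) • d = y := by rw [hd]; module
  have hy0 : x + (0:ℝ) • d = x := by module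
  rw [hy1, hy0] at hmono
  linarith

lemma pdasmd_coco {n : ℕ} (H Hd : EuclideanSpace ℝ (Fin n) → ℝ)
    (hHsmul : ∀ (c : ℝ) (x : EuclideanSpace ℝ (Fin n)), H (c • x) = |c| * H x)
    (hHnn : ∀ x, 0 ≤ H x)
    (hd_att : ∀ u, ∃ v, H v ≤ 1 ∧ ⟪u, v⟫ = Hd u) (hd_nn : ∀ u, 0 ≤ Hd u)
    (f : EuclideanSpace ℝ (Fin n) → ℝ) (g : EuclideanSpace ℝ (Fin n) → EuclideanSpace ℝ (Fin n))
    (hconv : ConvexOn ℝ Set.univ f)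
    (hf : ∀ x, HasGradientAt f (g x) x) (hgcont : Continuous g)
    (L : ℝ) (hL : 0 < L)
    (hkey : ∀ a b z, ⟪g a - g b, z⟫ ≤ L * H (a - b) * H z)
    (x y : EuclideanSpace ℝ (Fin n)) :
    Hd (g y - g x) ^ 2 ≤ 2 * L * (f y - f x - ⟪g x, y - x⟫) := by
  obtain ⟨v, hv1, hv2⟩ := hd_att (g y - g x)
  set D := Hd (g y - g x) with hD
  set t := D / L with ht
  have htnn : 0 ≤ t := div_nonneg (hd_nn _) hL.le
  set z := y - t • v with hz
  have h1 : f x + ⟪g x, z - x⟫ ≤ f z := pdasmd_grad_le hconv (hf x)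
  have h2 : f z ≤ f y + ⟪g y, z - y⟫ + L / 2 * H (z - y) ^ 2 :=
    pdasmd_descent H hHsmul f g hf hgcont L hkey y z
  have hzy : z - y = -(t • v) := by rw [hz]; abel
  have hHzy : H (z - y) ≤ t := by
    rw [hzy, ← neg_one_smul ℝ (t • v), hHsmul, hHsmul, abs_of_nonneg htnn]
    simp only [abs_neg, abs_one, one_mul]
    nlinarith [hHnn v]
  have hHzy2 : H (z - y) ^ 2 ≤ t ^ 2 := pow_le_pow_left₀ (hHnn _) hHzy 2
  have e1 : ⟪g y, z - y⟫ = -(t * ⟪g y, v⟫) := by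
    rw [hzy]; rw [inner_neg_right, real_inner_smul_right]
  have e2 : ⟪g x, z - x⟫ = ⟪g x, y - x⟫ - t * ⟪g x, v⟫ := by
    have : z - x = (y - x) - t • v := by rw [hz]; abel
    rw [this, inner_sub_right, real_inner_smul_right]
  have e3 : ⟪g y, v⟫ - ⟪g x, v⟫ = D := by
    rw [← inner_sub_left, hv2]
  have key : t * D ≤ f y - f x - ⟪g x, y - x⟫ + L / 2 * t ^ 2 := by
    nlinarith [h1, h2, e1, e2, e3, hHzy2, hL]
  have e4 : t * D = D ^ 2 / L := by rw [ht]; field_simp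
  have e5 : L / 2 * t ^ 2 = D ^ 2 / (2 * L) := by rw [ht]; field_simp
  have h6 : D ^ 2 / (2 * L) ≤ f y - f x - ⟪g x, y - x⟫ := by
    rw [e4, e5] at key
    have : D ^ 2 / L - D ^ 2 / (2 * L) = D ^ 2 / (2 * L) := by field_simp; ring
    linarith
  calc D ^ 2 = 2 * L * (D ^ 2 / (2 * L)) := by field_simp
    _ ≤ 2 * L * (f y - f x - ⟪g x, y - x⟫) := by
        apply mul_le_mul_of_nonneg_left h6 (by positivity)


set_option maxHeartbeats 1000000 in
/-- Coupling step 1.  One inner step of PDASMD: with `v_{k+1} = τ₁ z_k + τ₂ ṽ^s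
+ (1 − τ₁ − τ₂) y_k`, the variance-reduced gradient `∇̃_{k+1}(i)` and the mirror/proximal
updates `z_{k+1}(i)`, `y_{k+1}(i)`, one has for every `u`:
`α ⟨∇φ(v_{k+1}), z_k − u⟩ ≤ (α/τ₁)(φ(v_{k+1}) − E[φ(y_{k+1})] + τ₂ φ(ṽ^s) − τ₂ φ(v_{k+1})
− τ₂ ⟨∇φ(v_{k+1}), ṽ^s − v_{k+1}⟩) + V_{z_k}(u) − E[V_{z_{k+1}}(u)]`,
where `E[g] = Σ_i p_i g(i)`. -/
theorem pdasmd_coupling_step1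
    (dl m : ℕ) (hm : 0 < m)
    -- the norm ‖·‖_H and its dual norm ‖·‖_{H,*}
    (H : EuclideanSpace ℝ (Fin dl) → ℝ)
    (hH_def : ∀ x, H x = 0 ↔ x = 0)
    (hH_smul : ∀ (c : ℝ) (x : EuclideanSpace ℝ (Fin dl)), H (c • x) = |c| * H x)
    (hH_tri : ∀ x y, H (x + y) ≤ H x + H y)
    (Hd : EuclideanSpace ℝ (Fin dl) → ℝ)
    (hHd : ∀ u, Hd u = sSup ((fun v => ⟪u, v⟫) '' {v | H v ≤ 1}))
    -- the finite-sum function φ = (1/m) Σ φᵢ, with gradients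
    (φi : Fin m → EuclideanSpace ℝ (Fin dl) → ℝ)
    (gφi : Fin m → EuclideanSpace ℝ (Fin dl) → EuclideanSpace ℝ (Fin dl))
    (hφi_conv : ∀ i, ConvexOn ℝ Set.univ (φi i))
    (hφi_diff : ∀ i x, HasGradientAt (φi i) (gφi i x) x)
    (Li : Fin m → ℝ) (hLi : ∀ i, 0 < Li i)
    (hφi_smooth : ∀ i x y, Hd (gφi i x - gφi i y) ≤ Li i * H (x - y))
    (Lbar : ℝ) (hLbar : Lbar = (∑ i, Li i) / m)
    (pr : Fin m → ℝ) (hpr : ∀ i, pr i = Li i / (m * Lbar))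
    (φ : EuclideanSpace ℝ (Fin dl) → ℝ)
    (hφ : ∀ x, φ x = (1 / m : ℝ) * ∑ i, φi i x)
    (gφ : EuclideanSpace ℝ (Fin dl) → EuclideanSpace ℝ (Fin dl))
    (hgφ : ∀ x, gφ x = (m : ℝ)⁻¹ • ∑ i, gφi i x)
    -- the mirror map: differentiable, 1-strongly convex and γ-smooth w.r.t. ‖·‖_H
    (γ : ℝ) (w : EuclideanSpace ℝ (Fin dl) → ℝ)
    (gw : EuclideanSpace ℝ (Fin dl) → EuclideanSpace ℝ (Fin dl))
    (hw_diff : ∀ x, HasGradientAt w (gw x) x)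
    (hw_sc : ∀ x y, w x + ⟪gw x, y - x⟫ + (1 / 2) * H (y - x) ^ 2 ≤ w y)
    (hw_smooth : ∀ x y, Hd (gw x - gw y) ≤ γ * H (x - y))
    (Vb : EuclideanSpace ℝ (Fin dl) → EuclideanSpace ℝ (Fin dl) → ℝ)
    (hVb : ∀ x y, Vb x y = w y - w x - ⟪gw x, y - x⟫)
    -- one inner step of PDASMD
    (s : ℕ) (τ1 τ2 α : ℝ)
    (hτ1 : τ1 = 2 / ((s : ℝ) + 4)) (hτ2 : τ2 = 1 / 2) (hα : α = 1 / (9 * τ1 * Lbar))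
    (zk yk vts vk1 : EuclideanSpace ℝ (Fin dl))
    (hvk1 : vk1 = τ1 • zk + τ2 • vts + (1 - τ1 - τ2) • yk)
    (gt : Fin m → EuclideanSpace ℝ (Fin dl))
    (hgt : ∀ i, gt i = gφ vts + (1 / (m * pr i)) • (gφi i vk1 - gφi i vts))
    (z1 y1 : Fin m → EuclideanSpace ℝ (Fin dl))
    (hz1 : ∀ i z, (1 / α) * Vb zk (z1 i) + ⟪gt i, z1 i⟫
      ≤ (1 / α) * Vb zk z + ⟪gt i, z⟫)
    (hy1 : ∀ i y, (9 * Lbar / 2) * H (y1 i - vk1) ^ 2 + ⟪gt i, y1 i⟫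
      ≤ (9 * Lbar / 2) * H (y - vk1) ^ 2 + ⟪gt i, y⟫) :
    ∀ u : EuclideanSpace ℝ (Fin dl),
      α * ⟪gφ vk1, zk - u⟫
        ≤ (α / τ1) * (φ vk1 - (∑ i, pr i * φ (y1 i)) + τ2 * φ vts - τ2 * φ vk1
              - τ2 * ⟪gφ vk1, vts - vk1⟫)
          + Vb zk u - ∑ i, pr i * Vb (z1 i) u := by
  
  intro u
  -- basic positivity
  have hmR : (0:ℝ) < m := Nat.cast_pos.mpr hm
  have hmne : (m:ℝ) ≠ 0 := hmR.ne'
  have huniv : (Finset.univ : Finset (Fin m)).Nonempty := ⟨⟨0, hm⟩, Finset.mem_univ _⟩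
  have hLbar_pos : 0 < Lbar := by
    rw [hLbar]
    exact div_pos (Finset.sum_pos (fun i _ => hLi i) huniv) hmR
  have hτ1pos : 0 < τ1 := by rw [hτ1]; positivity
  have hαpos : 0 < α := by rw [hα]; positivity
  have hpr_pos : ∀ i, 0 < pr i := by
    intro i; rw [hpr]; exact div_pos (hLi i) (by positivity)
  have hsumLi : (∑ i, Li i) = m * Lbar := by rw [hLbar]; field_simp
  have hpr_sum : ∑ i, pr i = 1 := by
    have : ∑ i, pr i = (∑ i, Li i) / (m * Lbar) := by
      rw [Finset.sum_div]; exact Finset.sum_congr rfl fun i _ => hpr i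
    rw [this, hsumLi]
    field_simp
  -- norm equivalence and dual norm facts
  obtain ⟨c, C, hc, hC, hlow, hup⟩ := pdasmd_norm_bounds H hH_def hH_smul hH_tri
  obtain ⟨hd_nn, hd_inner, hd_sub, hd_neg, hd_smul, hd_att, hd_low⟩ :=
    pdasmd_dual_facts H Hd hHd hH_smul hH_tri c C hc hC hlow hup
  have hH0 : H 0 = 0 := (hH_def 0).mpr rfl
  have hHneg : ∀ x, H (-x) = H x := by
    intro x; rw [← neg_one_smul ℝ x, hH_smul]; simp
  have hHnn : ∀ x, 0 ≤ H x := by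
    intro x
    have := hH_tri x (-x)
    rw [add_neg_cancel, hH0, hHneg] at this
    linarith
  have hd_zero : Hd 0 = 0 := by
    have h1 := hd_smul 0 0 le_rfl
    have h2 := hd_nn 0
    rw [zero_smul] at h1
    linarith [h1, h2]
  -- continuity of the component gradients
  have hgcont : ∀ i, Continuous (gφi i) := by
    intro i
    apply Metric.continuous_iff.mpr
    intro x ε hε
    set K : ℝ := C * Li i * C + 1 with hK
    have hCL : 0 < C * Li i * C := mul_pos (mul_pos hC (hLi i)) hC
    have hKpos : 0 < K := by rw [hK]; linarith
    refine ⟨ε / K, div_pos hε hKpos, fun y hy => ?_⟩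
    have h1 : ‖gφi i y - gφi i x‖ ≤ C * Hd (gφi i y - gφi i x) := hd_low _
    have h2 : Hd (gφi i y - gφi i x) ≤ Li i * H (y - x) := hφi_smooth i y x
    have h3 : H (y - x) ≤ C * ‖y - x‖ := hup _
    have h4 : ‖y - x‖ = dist y x := (dist_eq_norm y x).symm
    rw [dist_eq_norm]
    calc ‖gφi i y - gφi i x‖ ≤ C * (Li i * H (y - x)) :=
          le_trans h1 (mul_le_mul_of_nonneg_left h2 hC.le)
      _ ≤ C * (Li i * (C * ‖y - x‖)) := by
          apply mul_le_mul_of_nonneg_left _ hC.le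
          exact mul_le_mul_of_nonneg_left h3 (hLi i).le
      _ = (C * Li i * C) * dist y x := by rw [h4]; ring
      _ ≤ (C * Li i * C) * (ε / K) :=
          mul_le_mul_of_nonneg_left hy.le hCL.le
      _ < K * (ε / K) := by
          apply mul_lt_mul_of_pos_right _ (div_pos hε hKpos)
          rw [hK]; linarith
      _ = ε := by field_simp
  have hkey : ∀ i a b z, ⟪gφi i a - gφi i b, z⟫ ≤ Li i * H (a - b) * H z := by
    intro i a b z
    calc ⟪gφi i a - gφi i b, z⟫ ≤ Hd (gφi i a - gφi i b) * H z := hd_inner _ _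
      _ ≤ Li i * H (a - b) * H z :=
          mul_le_mul_of_nonneg_right (hφi_smooth i a b) (hHnn z)
  -- averaged descent lemma for φ at vk1
  have hφ_descent : ∀ yy, φ yy ≤ φ vk1 + ⟪gφ vk1, yy - vk1⟫ + Lbar / 2 * H (yy - vk1) ^ 2 := by
    intro yy
    have h : ∀ i, φi i yy ≤ φi i vk1 + ⟪gφi i vk1, yy - vk1⟫ + Li i / 2 * H (yy - vk1) ^ 2 :=
      fun i => pdasmd_descent H hH_smul (φi i) (gφi i) (hφi_diff i) (hgcont i) (Li i)
        (hkey i) vk1 yy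
    have hsum : ∑ i, φi i yy
        ≤ ∑ i, (φi i vk1 + ⟪gφi i vk1, yy - vk1⟫ + Li i / 2 * H (yy - vk1) ^ 2) :=
      Finset.sum_le_sum fun i _ => h i
    have hinner : ⟪gφ vk1, yy - vk1⟫ = (m:ℝ)⁻¹ * ∑ i, ⟪gφi i vk1, yy - vk1⟫ := by
      rw [hgφ, real_inner_smul_left, sum_inner]
    rw [Finset.sum_add_distrib, Finset.sum_add_distrib] at hsum
    have e1 : ∑ i, Li i / 2 * H (yy - vk1) ^ 2 = (∑ i, Li i) * (H (yy - vk1) ^ 2 / 2) := by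
      rw [Finset.sum_mul]; exact Finset.sum_congr rfl fun i _ => by ring
    rw [e1, hsumLi] at hsum
    have h2 : (1 / m : ℝ) * ∑ i, φi i yy
        ≤ (1 / m : ℝ) * (∑ i, φi i vk1 + ∑ i, ⟪gφi i vk1, yy - vk1⟫
            + m * Lbar * (H (yy - vk1) ^ 2 / 2)) :=
      mul_le_mul_of_nonneg_left hsum (by positivity)
    rw [hφ, hφ, hinner]
    calc (1 / m : ℝ) * ∑ i, φi i yy
        ≤ (1 / m : ℝ) * (∑ i, φi i vk1 + ∑ i, ⟪gφi i vk1, yy - vk1⟫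
            + m * Lbar * (H (yy - vk1) ^ 2 / 2)) := h2
      _ = (1 / m : ℝ) * ∑ i, φi i vk1 + (m:ℝ)⁻¹ * ∑ i, ⟪gφi i vk1, yy - vk1⟫
            + Lbar / 2 * H (yy - vk1) ^ 2 := by field_simp
  -- first-order convexity gaps
  have hD_i : ∀ i, 0 ≤ φi i vts - φi i vk1 - ⟪gφi i vk1, vts - vk1⟫ := by
    intro i
    have := pdasmd_grad_le (hφi_conv i) (hφi_diff i vk1) (y := vts)
    linarith
  set D : ℝ := φ vts - φ vk1 - ⟪gφ vk1, vts - vk1⟫ with hDdef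
  have hD_eq : D = (1 / m : ℝ) * ∑ i, (φi i vts - φi i vk1 - ⟪gφi i vk1, vts - vk1⟫) := by
    rw [hDdef, hφ, hφ, hgφ, real_inner_smul_left, sum_inner]
    rw [Finset.sum_sub_distrib, Finset.sum_sub_distrib]
    ring
  have hD_nn : 0 ≤ D := by
    rw [hD_eq]
    apply mul_nonneg (by positivity)
    exact Finset.sum_nonneg fun i _ => hD_i i
  -- variance bound
  have hmpr : ∀ i, (m:ℝ) * pr i = Li i / Lbar := by
    intro i; rw [hpr]; field_simp
  have hmpr_pos : ∀ i, 0 < (m:ℝ) * pr i := fun i => mul_pos hmR (hpr_pos i)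
  have hXi : ∀ i, gt i - gφ vts = (1 / ((m:ℝ) * pr i)) • (gφi i vk1 - gφi i vts) := by
    intro i; rw [hgt]; abel
  have hcoef : ∀ i, pr i * (1 / ((m:ℝ) * pr i)) = (m:ℝ)⁻¹ := by
    intro i
    rw [mul_one_div, div_eq_iff (hmpr_pos i).ne', ← mul_assoc, inv_mul_cancel₀ hmne, one_mul]
  have hcoco : ∀ i, Hd (gφi i vk1 - gφi i vts) ^ 2
      ≤ 2 * Li i * (φi i vts - φi i vk1 - ⟪gφi i vk1, vts - vk1⟫) := by
    intro i
    have h := pdasmd_coco H Hd hH_smul hHnn hd_att hd_nn (φi i) (gφi i) (hφi_conv i)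
      (hφi_diff i) (hgcont i) (Li i) (hLi i) (hkey i) vk1 vts
    have e : gφi i vk1 - gφi i vts = -(gφi i vts - gφi i vk1) := by abel
    rw [e, hd_neg]
    linarith
  have hXbound : ∀ i, pr i * Hd (gt i - gφ vts) ^ 2
      ≤ 2 * Lbar / m * (φi i vts - φi i vk1 - ⟪gφi i vk1, vts - vk1⟫) := by
    intro i
    have h1 : Hd (gt i - gφ vts) ≤ (1 / ((m:ℝ) * pr i)) * Hd (gφi i vk1 - gφi i vts) := by
      rw [hXi i]
      exact hd_smul _ _ (one_div_pos.mpr (hmpr_pos i)).le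
    have h2 : Hd (gt i - gφ vts) ^ 2
        ≤ (1 / ((m:ℝ) * pr i)) ^ 2 * Hd (gφi i vk1 - gφi i vts) ^ 2 := by
      have := pow_le_pow_left₀ (hd_nn _) h1 2
      calc Hd (gt i - gφ vts) ^ 2 ≤ ((1 / ((m:ℝ) * pr i)) * Hd (gφi i vk1 - gφi i vts)) ^ 2 := this
        _ = (1 / ((m:ℝ) * pr i)) ^ 2 * Hd (gφi i vk1 - gφi i vts) ^ 2 := by ring
    have h3 := hcoco i
    have e : pr i * ((1 / ((m:ℝ) * pr i)) ^ 2 * (2 * Li i)) = 2 * Lbar / m := by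
      have hLine : Li i ≠ 0 := (hLi i).ne'
      rw [hpr]
      field_simp
    calc pr i * Hd (gt i - gφ vts) ^ 2
        ≤ pr i * ((1 / ((m:ℝ) * pr i)) ^ 2 * Hd (gφi i vk1 - gφi i vts) ^ 2) :=
          mul_le_mul_of_nonneg_left h2 (hpr_pos i).le
      _ ≤ pr i * ((1 / ((m:ℝ) * pr i)) ^ 2
            * (2 * Li i * (φi i vts - φi i vk1 - ⟪gφi i vk1, vts - vk1⟫))) := by
          apply mul_le_mul_of_nonneg_left _ (hpr_pos i).le
          exact mul_le_mul_of_nonneg_left h3 (by positivity)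
      _ = 2 * Lbar / m * (φi i vts - φi i vk1 - ⟪gφi i vk1, vts - vk1⟫) := by
          rw [← e]; ring
  have hsumX : ∑ i, pr i * Hd (gt i - gφ vts) ^ 2 ≤ 2 * Lbar * D := by
    have h1 := Finset.sum_le_sum fun i (_ : i ∈ Finset.univ) => hXbound i
    have e : ∑ i, 2 * Lbar / m * (φi i vts - φi i vk1 - ⟪gφi i vk1, vts - vk1⟫)
        = 2 * Lbar * D := by
      rw [← Finset.mul_sum, hD_eq]
      ring
    exact h1.trans e.le
  -- Y = gφ vk1 - gφ vts = ∑ pr i • (X i)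
  have hY : gφ vk1 - gφ vts = ∑ i, pr i • (gt i - gφ vts) := by
    have e1 : ∀ i, pr i • (gt i - gφ vts) = (m:ℝ)⁻¹ • (gφi i vk1 - gφi i vts) := by
      intro i
      rw [hXi i, smul_smul, hcoef i]
    rw [Finset.sum_congr rfl fun i _ => e1 i, ← Finset.smul_sum, hgφ, hgφ,
      Finset.sum_sub_distrib, smul_sub]
  have hHdY : Hd (gφ vk1 - gφ vts) ≤ ∑ i, pr i * Hd (gt i - gφ vts) := by
    rw [hY]
    calc Hd (∑ i, pr i • (gt i - gφ vts)) ≤ ∑ i, Hd (pr i • (gt i - gφ vts)) :=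
          Finset.le_sum_of_subadditive Hd hd_zero.le hd_sub _ _
      _ ≤ ∑ i, pr i * Hd (gt i - gφ vts) :=
          Finset.sum_le_sum fun i _ => hd_smul _ _ (hpr_pos i).le
  have hHdY2 : Hd (gφ vk1 - gφ vts) ^ 2 ≤ ∑ i, pr i * Hd (gt i - gφ vts) ^ 2 := by
    have hCS := Finset.sum_mul_sq_le_sq_mul_sq Finset.univ
      (fun i => Real.sqrt (pr i)) (fun i => Real.sqrt (pr i) * Hd (gt i - gφ vts))
    have e1 : ∀ i, Real.sqrt (pr i) * (Real.sqrt (pr i) * Hd (gt i - gφ vts))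
        = pr i * Hd (gt i - gφ vts) := by
      intro i
      rw [← mul_assoc, Real.mul_self_sqrt (hpr_pos i).le]
    have e2 : ∀ i, Real.sqrt (pr i) ^ 2 = pr i := fun i => Real.sq_sqrt (hpr_pos i).le
    have e3 : ∀ i, (Real.sqrt (pr i) * Hd (gt i - gφ vts)) ^ 2
        = pr i * Hd (gt i - gφ vts) ^ 2 := by
      intro i
      rw [mul_pow, e2]
    rw [Finset.sum_congr rfl fun i _ => e1 i] at hCS
    rw [Finset.sum_congr rfl fun i _ => e2 i, Finset.sum_congr rfl fun i _ => e3 i,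
      hpr_sum, one_mul] at hCS
    have hsq : Hd (gφ vk1 - gφ vts) ^ 2 ≤ (∑ i, pr i * Hd (gt i - gφ vts)) ^ 2 := by
      apply pow_le_pow_left₀ (hd_nn _) hHdY
    linarith
  have hvar : ∑ i, pr i * Hd (gt i - gφ vk1) ^ 2 ≤ 8 * Lbar * D := by
    have hptw : ∀ i, Hd (gt i - gφ vk1) ^ 2
        ≤ 2 * Hd (gt i - gφ vts) ^ 2 + 2 * Hd (gφ vk1 - gφ vts) ^ 2 := by
      intro i
      have e : gt i - gφ vk1 = (gt i - gφ vts) + (-(gφ vk1 - gφ vts)) := by abel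
      have h1 : Hd (gt i - gφ vk1) ≤ Hd (gt i - gφ vts) + Hd (gφ vk1 - gφ vts) := by
        rw [e]
        calc Hd ((gt i - gφ vts) + (-(gφ vk1 - gφ vts)))
            ≤ Hd (gt i - gφ vts) + Hd (-(gφ vk1 - gφ vts)) := hd_sub _ _
          _ = Hd (gt i - gφ vts) + Hd (gφ vk1 - gφ vts) := by rw [hd_neg]
      have hsq2 : Hd (gt i - gφ vk1) ^ 2
          ≤ (Hd (gt i - gφ vts) + Hd (gφ vk1 - gφ vts)) ^ 2 :=
        pow_le_pow_left₀ (hd_nn _) h1 2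
      nlinarith [hsq2, sq_nonneg (Hd (gt i - gφ vts) - Hd (gφ vk1 - gφ vts))]
    have h2 : ∑ i, pr i * Hd (gt i - gφ vk1) ^ 2
        ≤ ∑ i, pr i * (2 * Hd (gt i - gφ vts) ^ 2 + 2 * Hd (gφ vk1 - gφ vts) ^ 2) :=
      Finset.sum_le_sum fun i _ => mul_le_mul_of_nonneg_left (hptw i) (hpr_pos i).le
    have e3 : ∑ i, pr i * (2 * Hd (gt i - gφ vts) ^ 2 + 2 * Hd (gφ vk1 - gφ vts) ^ 2)
        = 2 * (∑ i, pr i * Hd (gt i - gφ vts) ^ 2) + 2 * Hd (gφ vk1 - gφ vts) ^ 2 := by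
      rw [Finset.sum_congr rfl fun i (_ : i ∈ Finset.univ) =>
        (by ring : pr i * (2 * Hd (gt i - gφ vts) ^ 2 + 2 * Hd (gφ vk1 - gφ vts) ^ 2)
          = 2 * (pr i * Hd (gt i - gφ vts) ^ 2) + Hd (gφ vk1 - gφ vts) ^ 2 * 2 * pr i)]
      rw [Finset.sum_add_distrib, ← Finset.mul_sum, ← Finset.mul_sum]
      rw [hpr_sum]
      ring
    rw [e3] at h2
    linarith [hHdY2, hsumX]
  -- expectation of the gradient estimator
  have hEgt : ∑ i, pr i • gt i = gφ vk1 := by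
    have e1 : ∀ i, pr i • gt i
        = pr i • gφ vts + (m:ℝ)⁻¹ • (gφi i vk1 - gφi i vts) := by
      intro i
      rw [hgt, smul_add, smul_smul, hcoef i]
    rw [Finset.sum_congr rfl fun i _ => e1 i, Finset.sum_add_distrib,
      ← Finset.sum_smul, hpr_sum, one_smul, ← Finset.smul_sum, hgφ, hgφ,
      Finset.sum_sub_distrib, smul_sub]
    abel
  -- optimality of the mirror step
  have hzopt : ∀ i, gw (z1 i) = gw zk - α • gt i := by
    intro i
    set F : EuclideanSpace ℝ (Fin dl) → ℝ :=
      fun z => (1 / α) * Vb zk z + ⟪gt i, z⟫ with hF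
    have hmin : IsLocalMin F (z1 i) :=
      Filter.Eventually.of_forall fun z => hz1 i z
    have hFder : HasFDerivAt F (InnerProductSpace.toDual ℝ _
        ((1 / α) • (gw (z1 i) - gw zk) + gt i)) (z1 i) := by
      have h1 : HasFDerivAt w (InnerProductSpace.toDual ℝ _ (gw (z1 i))) (z1 i) :=
        (hw_diff (z1 i)).hasFDerivAt
      have h2 : HasFDerivAt (fun z : EuclideanSpace ℝ (Fin dl) => ⟪gw zk, z⟫)
          (InnerProductSpace.toDual ℝ _ (gw zk)) (z1 i) :=
        (InnerProductSpace.toDual ℝ _ (gw zk)).hasFDerivAt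
      have h3 : HasFDerivAt (fun z : EuclideanSpace ℝ (Fin dl) => ⟪gt i, z⟫)
          (InnerProductSpace.toDual ℝ _ (gt i)) (z1 i) :=
        (InnerProductSpace.toDual ℝ _ (gt i)).hasFDerivAt
      have hFeq : F = fun z => (1 / α) * (w z - w zk - (⟪gw zk, z⟫ - ⟪gw zk, zk⟫))
          + ⟪gt i, z⟫ := by
        funext z
        show (1 / α) * Vb zk z + ⟪gt i, z⟫
          = (1 / α) * (w z - w zk - (⟪gw zk, z⟫ - ⟪gw zk, zk⟫)) + ⟪gt i, z⟫
        rw [hVb, inner_sub_right]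
      rw [hFeq]
      have h4 := (((h1.sub_const (w zk)).sub (h2.sub_const ⟪gw zk, zk⟫)).const_mul
        (1 / α)).add h3
      refine h4.congr_fderiv ?_
      apply ContinuousLinearMap.ext
      intro v
      simp only [ContinuousLinearMap.add_apply, ContinuousLinearMap.coe_smul',
        Pi.smul_apply, ContinuousLinearMap.coe_sub', Pi.sub_apply,
        InnerProductSpace.toDual_apply_apply, inner_add_left, inner_smul_left,
        inner_sub_left, smul_eq_mul, starRingEnd_apply, star_trivial]
      try ring
    have hzero := hmin.hasFDerivAt_eq_zero hFder
    have hG : (1 / α) • (gw (z1 i) - gw zk) + gt i = 0 :=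
      (InnerProductSpace.toDual ℝ (EuclideanSpace ℝ (Fin dl))).map_eq_zero_iff.mp hzero
    have h5 : gw (z1 i) - gw zk = α • (-gt i) := by
      have h6 : (1 / α) • (gw (z1 i) - gw zk) = -gt i := by
        have := hG
        rw [add_eq_zero_iff_eq_neg] at this
        exact this
      have h7 := congrArg (fun v => α • v) h6
      rw [smul_smul] at h7
      rw [show α * (1 / α) = 1 by field_simp, one_smul] at h7
      exact h7
    have h8 : gw (z1 i) = -(α • gt i) + gw zk := by
      rw [sub_eq_iff_eq_add] at h5
      rw [smul_neg] at h5
      exact h5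
    rw [h8]
    abel
  -- three-point identity
  have h3pt : ∀ i, α * ⟪gt i, z1 i - u⟫ = Vb zk u - Vb (z1 i) u - Vb zk (z1 i) := by
    intro i
    have e : α • gt i = gw zk - gw (z1 i) := by rw [hzopt i]; abel
    have lhs : α * ⟪gt i, z1 i - u⟫ = ⟪gw zk - gw (z1 i), z1 i - u⟫ := by
      rw [← e, real_inner_smul_left]
    rw [lhs, hVb, hVb, hVb]
    simp only [inner_sub_left, inner_sub_right]
    ring
  -- strong convexity of the mirror map
  have hVlow : ∀ i, (1/2 : ℝ) * H (z1 i - zk) ^ 2 ≤ Vb zk (z1 i) := by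
    intro i
    have := hw_sc zk (z1 i)
    rw [hVb]
    linarith
  -- the proximal step bound
  have hα1 : 9 * τ1 * Lbar * α = 1 := by
    rw [hα]; field_simp
  have hprox : ∀ i, α * ⟪gt i, zk - z1 i⟫ - (1/2 : ℝ) * H (z1 i - zk) ^ 2
      ≤ (α / τ1) * (⟪gt i, vk1 - y1 i⟫ - (9 * Lbar / 2) * H (y1 i - vk1) ^ 2) := by
    intro i
    have h := hy1 i (vk1 + τ1 • (z1 i - zk))
    have e1 : vk1 + τ1 • (z1 i - zk) - vk1 = τ1 • (z1 i - zk) := by abel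
    rw [e1, hH_smul, abs_of_pos hτ1pos, inner_add_right, real_inner_smul_right] at h
    set A : ℝ := ⟪gt i, z1 i - zk⟫ with hA
    set B : ℝ := H (z1 i - zk) with hB
    set Cc : ℝ := H (y1 i - vk1) with hCc
    have eznm : ⟪gt i, zk - z1 i⟫ = -A := by
      rw [hA, ← inner_neg_right]
      congr 1
      abel
    have evy : ⟪gt i, vk1 - y1 i⟫ = ⟪gt i, vk1⟫ - ⟪gt i, y1 i⟫ := inner_sub_right _ _ _
    have h' : -(τ1 * A) - 9 * Lbar / 2 * (τ1 * B) ^ 2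
        ≤ (⟪gt i, vk1⟫ - ⟪gt i, y1 i⟫) - 9 * Lbar / 2 * Cc ^ 2 := by
      nlinarith [h]
    have h'' := mul_le_mul_of_nonneg_left h' (div_nonneg hαpos.le hτ1pos.le)
    have e2 : (α / τ1) * (-(τ1 * A) - 9 * Lbar / 2 * (τ1 * B) ^ 2)
        = -(α * A) - (1/2 : ℝ) * B ^ 2 := by
      have h9 : (9 : ℝ) * τ1 * Lbar ≠ 0 := by positivity
      rw [hα]
      field_simp
    rw [e2] at h''
    rw [eznm, evy]
    linarith
  -- the smoothness/variance per-index bound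
  have hsm : ∀ i, ⟪gt i, vk1 - y1 i⟫ - (9 * Lbar / 2) * H (y1 i - vk1) ^ 2
      ≤ φ vk1 - φ (y1 i) + (1 / (16 * Lbar)) * Hd (gt i - gφ vk1) ^ 2 := by
    intro i
    have hdesc := hφ_descent (y1 i)
    have hsplit : ⟪gt i, vk1 - y1 i⟫
        = ⟪gφ vk1, vk1 - y1 i⟫ + ⟪gt i - gφ vk1, vk1 - y1 i⟫ := by
      rw [inner_sub_left]
      ring
    have hcs : ⟪gt i - gφ vk1, vk1 - y1 i⟫ ≤ Hd (gt i - gφ vk1) * H (vk1 - y1 i) :=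
      hd_inner _ _
    have hHsym : H (vk1 - y1 i) = H (y1 i - vk1) := by
      rw [show vk1 - y1 i = -(y1 i - vk1) by abel, hHneg]
    have hflip : ⟪gφ vk1, vk1 - y1 i⟫ = -⟪gφ vk1, y1 i - vk1⟫ := by
      rw [show vk1 - y1 i = -(y1 i - vk1) by abel, inner_neg_right]
    have hAM : Hd (gt i - gφ vk1) * H (y1 i - vk1)
        ≤ (1 / (16 * Lbar)) * Hd (gt i - gφ vk1) ^ 2 + 4 * Lbar * H (y1 i - vk1) ^ 2 := by
      have hsq := sq_nonneg (Hd (gt i - gφ vk1) - 8 * Lbar * H (y1 i - vk1))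
      have h16 : (0:ℝ) < 16 * Lbar := by positivity
      rw [← sub_nonneg]
      have e : (1 / (16 * Lbar)) * Hd (gt i - gφ vk1) ^ 2 + 4 * Lbar * H (y1 i - vk1) ^ 2
          - Hd (gt i - gφ vk1) * H (y1 i - vk1)
          = (Hd (gt i - gφ vk1) - 8 * Lbar * H (y1 i - vk1)) ^ 2 / (16 * Lbar) := by
        field_simp
        ring
      rw [e]
      positivity
    rw [hsplit, hflip]
    rw [hHsym] at hcs
    nlinarith [hdesc, hcs, hAM]
  -- per-index combined bound
  have hper : ∀ i, α * ⟪gt i, zk - u⟫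
      ≤ (α / τ1) * (φ vk1 - φ (y1 i) + (1 / (16 * Lbar)) * Hd (gt i - gφ vk1) ^ 2)
        + Vb zk u - Vb (z1 i) u := by
    intro i
    have esplit : ⟪gt i, zk - u⟫ = ⟪gt i, zk - z1 i⟫ + ⟪gt i, z1 i - u⟫ := by
      rw [← inner_add_right]
      congr 1
      abel
    have h1 := hprox i
    have h2 := h3pt i
    have h3 := hVlow i
    have h4 := mul_le_mul_of_nonneg_left (hsm i) (div_nonneg hαpos.le hτ1pos.le)
    have e : α * ⟪gt i, zk - u⟫ = α * ⟪gt i, zk - z1 i⟫ + α * ⟪gt i, z1 i - u⟫ := by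
      rw [esplit]; ring
    rw [e, h2]
    linarith
  -- take the expectation
  have hsum := Finset.sum_le_sum fun i (_ : i ∈ Finset.univ) =>
    mul_le_mul_of_nonneg_left (hper i) (hpr_pos i).le
  have hLHS : ∑ i, pr i * (α * ⟪gt i, zk - u⟫) = α * ⟪gφ vk1, zk - u⟫ := by
    rw [← hEgt, sum_inner, Finset.mul_sum]
    apply Finset.sum_congr rfl
    intro i _
    rw [real_inner_smul_left]
    ring
  have hRHS : ∑ i, pr i * ((α / τ1) * (φ vk1 - φ (y1 i)
        + (1 / (16 * Lbar)) * Hd (gt i - gφ vk1) ^ 2) + Vb zk u - Vb (z1 i) u)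
      = (α / τ1) * (φ vk1 - (∑ i, pr i * φ (y1 i))
          + (1 / (16 * Lbar)) * ∑ i, pr i * Hd (gt i - gφ vk1) ^ 2)
        + Vb zk u - ∑ i, pr i * Vb (z1 i) u := by
    have e1 : ∀ i, pr i * ((α / τ1) * (φ vk1 - φ (y1 i)
          + (1 / (16 * Lbar)) * Hd (gt i - gφ vk1) ^ 2) + Vb zk u - Vb (z1 i) u)
        = (α / τ1) * (pr i * φ vk1 - pr i * φ (y1 i)
            + (1 / (16 * Lbar)) * (pr i * Hd (gt i - gφ vk1) ^ 2))
          + pr i * Vb zk u - pr i * Vb (z1 i) u := by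
      intro i; ring
    have e2 : ∑ i, pr i * Vb zk u = Vb zk u := by
      rw [← Finset.sum_mul, hpr_sum, one_mul]
    have e3 : ∑ i, pr i * φ vk1 = φ vk1 := by
      rw [← Finset.sum_mul, hpr_sum, one_mul]
    rw [Finset.sum_congr rfl fun i _ => e1 i]
    rw [Finset.sum_sub_distrib, Finset.sum_add_distrib, ← Finset.mul_sum,
      Finset.sum_add_distrib, Finset.sum_sub_distrib, ← Finset.mul_sum, e2, e3]
  rw [hLHS, hRHS] at hsum
  -- final assembly
  have hvar' : (α / τ1) * ((1 / (16 * Lbar)) * ∑ i, pr i * Hd (gt i - gφ vk1) ^ 2)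
      ≤ (α / τ1) * ((1 / (16 * Lbar)) * (8 * Lbar * D)) := by
    apply mul_le_mul_of_nonneg_left _ (div_nonneg hαpos.le hτ1pos.le)
    exact mul_le_mul_of_nonneg_left hvar (by positivity)
  have efin : (1 / (16 * Lbar)) * (8 * Lbar * D) = D / 2 := by
    field_simp
    ring
  have hτ2D : τ2 * φ vts - τ2 * φ vk1 - τ2 * ⟪gφ vk1, vts - vk1⟫ = D / 2 := by
    rw [hτ2, hDdef]
    ring
  calc α * ⟪gφ vk1, zk - u⟫
      ≤ (α / τ1) * (φ vk1 - (∑ i, pr i * φ (y1 i))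
          + (1 / (16 * Lbar)) * ∑ i, pr i * Hd (gt i - gφ vk1) ^ 2)
        + Vb zk u - ∑ i, pr i * Vb (z1 i) u := hsum
    _ ≤ (α / τ1) * (φ vk1 - (∑ i, pr i * φ (y1 i)) + D / 2)
        + Vb zk u - ∑ i, pr i * Vb (z1 i) u := by
        have expand : (α / τ1) * (φ vk1 - (∑ i, pr i * φ (y1 i))
              + (1 / (16 * Lbar)) * ∑ i, pr i * Hd (gt i - gφ vk1) ^ 2)
            = (α / τ1) * (φ vk1 - (∑ i, pr i * φ (y1 i)))
              + (α / τ1) * ((1 / (16 * Lbar)) * ∑ i, pr i * Hd (gt i - gφ vk1) ^ 2) := by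
          ring
        have expand2 : (α / τ1) * (φ vk1 - (∑ i, pr i * φ (y1 i)) + D / 2)
            = (α / τ1) * (φ vk1 - (∑ i, pr i * φ (y1 i)))
              + (α / τ1) * (D / 2) := by ring
        rw [efin] at hvar'
        linarith [hvar']
    _ = (α / τ1) * (φ vk1 - (∑ i, pr i * φ (y1 i)) + τ2 * φ vts - τ2 * φ vk1
          - τ2 * ⟪gφ vk1, vts - vk1⟫) + Vb zk u - ∑ i, pr i * Vb (z1 i) u := by
        rw [show φ vk1 - (∑ i, pr i * φ (y1 i)) + τ2 * φ vts - τ2 * φ vk1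
            - τ2 * ⟪gφ vk1, vts - vk1⟫
          = φ vk1 - (∑ i, pr i * φ (y1 i))
            + (τ2 * φ vts - τ2 * φ vk1 - τ2 * ⟪gφ vk1, vts - vk1⟫) by ring, hτ2D]
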